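/- Let c, C, ρ₀ > 0 and μ₀ ∈ (0,1). Let (ρ_n) and (μ_n) be sequences of positive reals such that for all 0 ≤ n ≤ N: ρ_{n+1} ≤ ρ_n + C, μ_{n+1} ≥ μ_n · exp(c / ρ_{n+1}), and μ_n < 1. Then N + 1 ≤ ((ρ₀ + C)/C) · μ₀^{-C/c}. -/

import Mathlib

/-- Discrete Grönwall-type blow-up lemma: if `ρ` grows at most linearly
(`ρ_{n+1} ≤ ρ_n + C`) while `μ` grows multiplicatively (`μ_{n+1} ≥ μ_n exp(c/ρ_{n+1})`)
and `μ_n` stays below `1` for `n ≤ N`, then `N + 1 ≤ ((ρ₀ + C)/C) · μ₀^{-C/c}`. -/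
theorem discrete_blowup (c C : ℝ) (hc : 0 < c) (hC : 0 < C)
    (ρ μ : ℕ → ℝ) (N : ℕ)
    (hρ0 : 0 < ρ 0) (hμ0 : μ 0 ∈ Set.Ioo (0 : ℝ) 1)
    (hρpos : ∀ n, 0 < ρ n) (hμpos : ∀ n, 0 < μ n)
    (hρ : ∀ n ≤ N, ρ (n + 1) ≤ ρ n + C)
    (hμ : ∀ n ≤ N, μ n * Real.exp (c / ρ (n + 1)) ≤ μ (n + 1))
    (hμlt : ∀ n ≤ N, μ n < 1) :
    (N : ℝ) + 1 ≤ ((ρ 0 + C) / C) * (μ 0) ^ (-(C / c)) := by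
  obtain ⟨hμ0pos, hμ0lt⟩ := hμ0
  have hρbd : ∀ n, n ≤ N + 1 → ρ n ≤ ρ 0 + C * n := by
    intro n
    induction n with
    | zero => intro _; simp
    | succ k ih =>
      intro hk
      have h1 : ρ (k + 1) ≤ ρ k + C := hρ k (by omega)
      have h2 := ih (by omega)
      push_cast
      linarith
  have key : ∀ n ≤ N, μ 0 * ((ρ 0 + C * n + C) / (ρ 0 + C)) ^ (c / C) ≤ μ n := by
    intro n
    induction n with
    | zero =>
      intro _
      rw [Nat.cast_zero, mul_zero, add_zero, div_self (show (ρ 0 + C) ≠ 0 by positivity),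
        Real.one_rpow, mul_one]
    | succ k ih =>
      intro hk
      have hk' : k ≤ N := by omega
      have hkk := ih hk'
      have hρk : ρ (k + 1) ≤ ρ 0 + C * ((k:ℝ) + 1) := by
        have := hρbd (k + 1) (by omega); push_cast at this; linarith
      have hpos1 : (0:ℝ) < ρ 0 + C * k + C := by positivity
      have hpos2 : (0:ℝ) < ρ 0 + C * (k + 1) + C := by positivity
      have hpos0 : (0:ℝ) < ρ 0 + C := by positivity
      have hratio : (0:ℝ) < (ρ 0 + C * (k + 1) + C) / (ρ 0 + C * k + C) := by positivity
      have hlog : Real.log ((ρ 0 + C * (k + 1) + C) / (ρ 0 + C * k + C))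
          ≤ C / (ρ 0 + C * k + C) := by
        have h := Real.log_le_sub_one_of_pos hratio
        have heq : (ρ 0 + C * (k + 1) + C) / (ρ 0 + C * k + C) - 1
            = C / (ρ 0 + C * k + C) := by
          field_simp
          ring
        linarith [heq ▸ h]
      -- exp(c/ρ(k+1)) ≥ ratio^(c/C)
      have hstep : ((ρ 0 + C * (k + 1) + C) / (ρ 0 + C * k + C)) ^ (c / C)
          ≤ Real.exp (c / ρ (k + 1)) := by
        rw [← Real.exp_log hratio, ← Real.exp_mul, Real.exp_le_exp]
        have h1 : (c / C) * Real.log ((ρ 0 + C * (k + 1) + C) / (ρ 0 + C * k + C))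
            ≤ (c / C) * (C / (ρ 0 + C * k + C)) :=
          mul_le_mul_of_nonneg_left hlog (by positivity)
        have h2 : (c / C) * (C / (ρ 0 + C * k + C)) = c / (ρ 0 + C * k + C) := by
          field_simp
        have h3 : c / (ρ 0 + C * k + C) ≤ c / ρ (k + 1) := by
          apply div_le_div_of_nonneg_left hc.le (hρpos _)
          linarith [hρk]
        linarith
      have hmulpos : (0:ℝ) ≤ μ 0 := hμ0pos.le
      have h4 : μ 0 * ((ρ 0 + C * ↑(k + 1) + C) / (ρ 0 + C)) ^ (c / C)
          ≤ μ 0 * ((ρ 0 + C * k + C) / (ρ 0 + C)) ^ (c / C) * Real.exp (c / ρ (k + 1)) := by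
        have hsplit : ((ρ 0 + C * ↑(k + 1) + C) / (ρ 0 + C)) ^ (c / C)
            = ((ρ 0 + C * k + C) / (ρ 0 + C)) ^ (c / C)
              * (((ρ 0 + C * (k + 1) + C)) / (ρ 0 + C * k + C)) ^ (c / C) := by
          rw [← Real.mul_rpow (by positivity) (by positivity)]
          congr 1
          push_cast
          field_simp
        rw [hsplit, ← mul_assoc]
        apply mul_le_mul_of_nonneg_left hstep (by positivity)
      calc μ 0 * ((ρ 0 + C * ↑(k + 1) + C) / (ρ 0 + C)) ^ (c / C)
          ≤ μ 0 * ((ρ 0 + C * k + C) / (ρ 0 + C)) ^ (c / C) * Real.exp (c / ρ (k + 1)) := h4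
        _ ≤ μ k * Real.exp (c / ρ (k + 1)) :=
            mul_le_mul_of_nonneg_right hkk (Real.exp_pos _).le
        _ ≤ μ (k + 1) := hμ k hk'
  -- conclude
  have hpos0 : (0:ℝ) < ρ 0 + C := by positivity
  have hposN : (0:ℝ) < ρ 0 + C * N + C := by positivity
  have hratioN : (1:ℝ) ≤ (ρ 0 + C * N + C) / (ρ 0 + C) := by
    rw [le_div_iff₀ hpos0]
    nlinarith [Nat.cast_nonneg (α := ℝ) N]
  have hfinal : μ 0 * ((ρ 0 + C * N + C) / (ρ 0 + C)) ^ (c / C) < 1 :=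
    lt_of_le_of_lt (key N le_rfl) (hμlt N le_rfl)
  have hXpos : (0:ℝ) < ((ρ 0 + C * N + C) / (ρ 0 + C)) ^ (c / C) := by positivity
  have hlt : ((ρ 0 + C * N + C) / (ρ 0 + C)) ^ (c / C) ≤ (μ 0)⁻¹ := by
    rw [← one_div, le_div_iff₀ hμ0pos]
    nlinarith [hfinal]
  have hexp1 : (c / C) * (C / c) = 1 := by field_simp
  have hratio_eq : (ρ 0 + C * N + C) / (ρ 0 + C)
      = (((ρ 0 + C * N + C) / (ρ 0 + C)) ^ (c / C)) ^ (C / c) := by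
    rw [← Real.rpow_mul (by positivity), hexp1, Real.rpow_one]
  have hkey2 : (ρ 0 + C * N + C) / (ρ 0 + C) ≤ (μ 0) ^ (-(C / c)) := by
    rw [hratio_eq, Real.rpow_neg hμ0pos.le, ← Real.inv_rpow hμ0pos.le]
    exact Real.rpow_le_rpow hXpos.le hlt (by positivity)
  have h5 : ((N:ℝ) + 1) * C ≤ ρ 0 + C * N + C := by nlinarith
  calc (N:ℝ) + 1 = (((N:ℝ) + 1) * C) / C := by field_simp
    _ ≤ (ρ 0 + C * N + C) / C := by gcongr
    _ = ((ρ 0 + C) / C) * ((ρ 0 + C * N + C) / (ρ 0 + C)) := by field_simp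
    _ ≤ ((ρ 0 + C) / C) * (μ 0) ^ (-(C / c)) := by
        apply mul_le_mul_of_nonneg_left hkey2 (by positivity)
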